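/- For all s ≥ 0 and real x with the denominators nonzero, 1/(U_0(x)U_1(x)) + 1/(U_1(x)U_2(x)) + ··· + 1/(U_s(x)U_{s+1}(x)) = U_s(x)/U_{s+1}(x). -/

import Mathlib

/-- Chebyshev polynomials of the second kind: `U 0 = 1`, `U 1 x = 2x`,
`U (n+1) x = 2x * U n x - U (n-1) x`. -/
def chebU : ℕ → ℝ → ℝ
  | 0, _ => 1
  | 1, x => 2 * x
  | (k + 2), x => 2 * x * chebU (k + 1) x - chebU k x

lemma chebU_det (n : ℕ) (x : ℝ) :
    chebU (n + 1) x ^ 2 - chebU n x * chebU (n + 2) x = 1 := by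
  induction n with
  | zero => simp [chebU]; ring
  | succ k ih =>
    have h3 : chebU (k + 3) x = 2 * x * chebU (k + 2) x - chebU (k + 1) x := rfl
    have h2 : chebU (k + 2) x = 2 * x * chebU (k + 1) x - chebU k x := rfl
    show chebU (k + 2) x ^ 2 - chebU (k + 1) x * chebU (k + 3) x = 1
    linear_combination ih - chebU (k + 1) x * h3 + chebU (k + 2) x * h2

/-- For all `s ≥ 0` and real `x` with the denominators nonzero,
`1/(U_0 U_1) + 1/(U_1 U_2) + ⋯ + 1/(U_s U_{s+1}) = U_s/U_{s+1}`. -/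
theorem chebU_inv_sum (s : ℕ) (x : ℝ) (hne : ∀ i ≤ s + 1, chebU i x ≠ 0) :
    ∑ i ∈ Finset.range (s + 1), 1 / (chebU i x * chebU (i + 1) x)
      = chebU s x / chebU (s + 1) x := by
  induction s with
  | zero => simp [chebU]
  | succ k ih =>
    rw [Finset.sum_range_succ, ih (fun i hi => hne i (by omega))]
    have h1 := hne (k + 1) (by omega)
    have h2 := hne (k + 2) (by omega)
    have hd := chebU_det k x
    have he : chebU (k + 1 + 1) x = chebU (k + 2) x := rfl
    rw [he]
    field_simp
    linear_combination (-1 : ℝ) * hd
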